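/- (Zero-knowledge of single-qubit Z measurements.) Fix θ ∈ ℝ. For every real number z, each of the sets {(k,h) ∈ ℝ² : k > 0, h > 0, Tr[ρ_QET(k,h,θ)·(Z⊗I₂)] = z} and {(k,h) ∈ ℝ² : k > 0, h > 0, Tr[ρ_QET(k,h,θ)·(I₂⊗Z)] = z} is uncountable whenever it is nonempty. -/
import Mathlib


open Matrix Kronecker
open scoped ComplexOrder

noncomputable section

abbrev M2 : Type := Matrix (Fin 2) (Fin 2) ℂ
abbrev M4 : Type := Matrix (Fin 2 × Fin 2) (Fin 2 × Fin 2) ℂ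

/-- Pauli X matrix. -/
def σx : M2 := !![0, 1; 1, 0]
/-- Pauli Y matrix. -/
def σy : M2 := !![0, -Complex.I; Complex.I, 0]
/-- Pauli Z matrix. -/
def σz : M2 := !![1, 0; 0, -1]

def X1 : M4 := σx ⊗ₖ (1 : M2)
def Z1 : M4 := σz ⊗ₖ (1 : M2)
def Z2 : M4 := (1 : M2) ⊗ₖ σz
def Y2 : M4 := (1 : M2) ⊗ₖ σy
def XX : M4 := σx ⊗ₖ σx

def H1m (k h : ℝ) : M4 := (h : ℂ) • Z1 + ((h ^ 2 / Real.sqrt (h ^ 2 + k ^ 2) : ℝ) : ℂ) • (1 : M4)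
def H2m (k h : ℝ) : M4 := (h : ℂ) • Z2 + ((h ^ 2 / Real.sqrt (h ^ 2 + k ^ 2) : ℝ) : ℂ) • (1 : M4)
def Vm (k h : ℝ) : M4 :=
  ((2 * k : ℝ) : ℂ) • XX + ((2 * k ^ 2 / Real.sqrt (h ^ 2 + k ^ 2) : ℝ) : ℂ) • (1 : M4)
def Hm (k h : ℝ) : M4 := H1m k h + H2m k h + Vm k h

def e00 : (Fin 2 × Fin 2) → ℂ := fun p => if p = (0, 0) then 1 else 0
def e11 : (Fin 2 × Fin 2) → ℂ := fun p => if p = (1, 1) then 1 else 0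

/-- the ground state of the minimal QET Hamiltonian -/
def gs (k h : ℝ) : (Fin 2 × Fin 2) → ℂ := fun p =>
  ((1 / Real.sqrt 2 * Real.sqrt (1 - h / Real.sqrt (h ^ 2 + k ^ 2)) : ℝ) : ℂ) * e00 p
  - ((1 / Real.sqrt 2 * Real.sqrt (1 + h / Real.sqrt (h ^ 2 + k ^ 2)) : ℝ) : ℂ) * e11 p

/-- the rank-one operator |g⟩⟨g| -/
def gProj (k h : ℝ) : M4 := Matrix.vecMulVec (gs k h) (star (gs k h))

/-- Alice's projective measurement operator -/
def PA (μ : ℝ) : M4 := (2 : ℂ)⁻¹ • ((1 : M4) + (μ : ℂ) • X1)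

/-- Bob's conditional unitary -/
def UB (ν θ : ℝ) : M4 :=
  ((Real.cos θ : ℝ) : ℂ) • (1 : M4) - ((Complex.I * ν * Real.sin θ) : ℂ) • Y2

/-- the post-protocol state -/
def ρQET (k h θ : ℝ) : M4 :=
  UB (-1) θ * PA (-1) * gProj k h * PA (-1) * (UB (-1) θ)ᴴ
  + UB 1 θ * PA 1 * gProj k h * PA 1 * (UB 1 θ)ᴴ

/-- the normalized post-measurement state with prover outcome μ and verifier operation UB ν θ -/
def ρMN (k h μ ν θ : ℝ) : M4 := (2 : ℂ) • (UB ν θ * PA μ * gProj k h * PA μ * (UB ν θ)ᴴ)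

lemma sqrt_scale (t k h : ℝ) (ht : 0 < t) :
    Real.sqrt ((t*h)^2 + (t*k)^2) = t * Real.sqrt (h^2+k^2) := by
  rw [show (t*h)^2+(t*k)^2 = t^2*(h^2+k^2) by ring, Real.sqrt_mul (sq_nonneg t),
    Real.sqrt_sq ht.le]

lemma gs_scale (t k h : ℝ) (ht : 0 < t) (hk : 0 < k) :
    gs (t*k) (t*h) = gs k h := by
  have hr : (0:ℝ) < Real.sqrt (h^2+k^2) :=
    Real.sqrt_pos.2 (by positivity)
  unfold gs
  rw [sqrt_scale t k h ht, mul_div_mul_left _ _ ht.ne']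

lemma rho_scale (t k h θ : ℝ) (ht : 0 < t) (hk : 0 < k) :
    ρQET (t*k) (t*h) θ = ρQET k h θ := by
  unfold ρQET gProj
  rw [gs_scale t k h ht hk]

lemma aux_uncountable (θ z : ℝ) (A : M4)
    (hne : {p : ℝ × ℝ | 0 < p.1 ∧ 0 < p.2 ∧
        (ρQET p.1 p.2 θ * A).trace = (z : ℂ)}.Nonempty) :
    ¬ {p : ℝ × ℝ | 0 < p.1 ∧ 0 < p.2 ∧
        (ρQET p.1 p.2 θ * A).trace = (z : ℂ)}.Countable := by
  obtain ⟨⟨k, h⟩, hk, hh, htr⟩ := hne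
  intro hc
  set S := {p : ℝ × ℝ | 0 < p.1 ∧ 0 < p.2 ∧
        (ρQET p.1 p.2 θ * A).trace = (z : ℂ)}
  have hf : Function.Injective (fun t : ℝ => (t*k, t*h)) := by
    intro a b hab
    have : a * k = b * k := congrArg Prod.fst hab
    exact mul_right_cancel₀ hk.ne' this
  have hsub : Set.Ioi (0:ℝ) ⊆ (fun t : ℝ => (t*k, t*h)) ⁻¹' S := by
    intro t ht
    have ht : (0:ℝ) < t := ht
    refine ⟨mul_pos ht hk, mul_pos ht hh, ?_⟩
    simp only [rho_scale t k h θ ht hk]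
    exact htr
  have hcnt : (Set.Ioi (0:ℝ)).Countable := (hc.preimage hf).mono hsub
  rw [← Cardinal.le_aleph0_iff_set_countable, Cardinal.mk_Ioi_real] at hcnt
  exact absurd hcnt (not_le.2 Cardinal.aleph0_lt_continuum)


/-- Zero-knowledge of single-qubit Z measurements: each attained value of
`Tr[ρ_QET(k,h,θ)·(Z⊗I₂)]` and of `Tr[ρ_QET(k,h,θ)·(I₂⊗Z)]` has an uncountable preimage
in the open positive quadrant (points are `p = (k, h)`). -/
theorem qet_Z_zero_knowledge (θ : ℝ) (z : ℝ) :
    ({p : ℝ × ℝ | 0 < p.1 ∧ 0 < p.2 ∧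
        (ρQET p.1 p.2 θ * Z1).trace = (z : ℂ)}.Nonempty →
      ¬ {p : ℝ × ℝ | 0 < p.1 ∧ 0 < p.2 ∧
        (ρQET p.1 p.2 θ * Z1).trace = (z : ℂ)}.Countable) ∧
    ({p : ℝ × ℝ | 0 < p.1 ∧ 0 < p.2 ∧
        (ρQET p.1 p.2 θ * Z2).trace = (z : ℂ)}.Nonempty →
      ¬ {p : ℝ × ℝ | 0 < p.1 ∧ 0 < p.2 ∧
        (ρQET p.1 p.2 θ * Z2).trace = (z : ℂ)}.Countable) :=
  ⟨aux_uncountable θ z Z1, aux_uncountable θ z Z2⟩
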